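/- Let n ≥ 1 and let r ≡ 2 (mod 4), r ≥ 2. Then, as polynomials in q, Σ_{π ∈ A_{r,n}} q^{RtlMin_A(π)} = 2^{n−1} · Π_{i=1}^{n} ((r/2)·(q + i − 1) + 1 − q), where, writing π in window notation as (a_1^{[c_1]} ⋯ a_n^{[c_n]}) (so a_i = |π|(i) and c_i is the color at position i), RtlMin_A(π) = #{i : 1 ≤ i ≤ n, a_j > a_i for all j > i, and c_i ∉ {0, r/2}} is the number of colored right-to-left minima whose color is not in {0, r/2}. -/

import Mathlib

open Multiplicative

namespace ACP

/-- The action of `Sₙ` on color vectors by permuting coordinates. -/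
def permAct (r n : ℕ) : Equiv.Perm (Fin n) →* MulAut (Fin n → Multiplicative (ZMod r)) where
  toFun τ :=
    { toFun := fun z => z ∘ τ.symm
      invFun := fun z => z ∘ τ
      left_inv := fun z => by ext i; simp
      right_inv := fun z => by ext i; simp
      map_mul' := fun z w => rfl }
  map_one' := by ext z i; rfl
  map_mul' a b := by ext z i; rfl

/-- The group of colored permutations `G_{r,n} = ℤ_r ≀ Sₙ`. -/
abbrev G (r n : ℕ) : Type := (Fin n → Multiplicative (ZMod r)) ⋊[permAct r n] Equiv.Perm (Fin n)

/-- The Coxeter-like generators: `gen r n 0 = s₀` colors the digit 1 by one color,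
`gen r n i = sᵢ` (for `1 ≤ i ≤ n-1`) is the adjacent transposition `(i, i+1)`. -/
def gen (r n : ℕ) (i : ℕ) : G r n :=
  if h : 0 < i ∧ i < n then
    ⟨1, Equiv.swap ⟨i - 1, by omega⟩ ⟨i, h.2⟩⟩
  else
    ⟨fun j => if (j : ℕ) = 0 then ofAdd (1 : ZMod r) else 1, 1⟩

def zmod2ToUnits : Multiplicative (ZMod 2) →* ℤˣ where
  toFun z := (-1) ^ (toAdd z).val
  map_one' := rfl
  map_mul' := by decide

def csumHom (r n : ℕ) (hr : 2 ∣ r) :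
    (Fin n → Multiplicative (ZMod r)) →* Multiplicative (ZMod 2) where
  toFun z := ofAdd (∑ i, ZMod.castHom hr (ZMod 2) (toAdd (z i)))
  map_one' := by simp
  map_mul' z w := by
    have h : ∀ i, ZMod.castHom hr (ZMod 2) (toAdd ((z * w) i))
        = ZMod.castHom hr (ZMod 2) (toAdd (z i)) + ZMod.castHom hr (ZMod 2) (toAdd (w i)) :=
      fun i => map_add _ _ _
    simp only [h, Finset.sum_add_distrib, ofAdd_add]

/-- The sign character of `G_{r,n}` (for even `r`): sends every Coxeter-like
generator `sᵢ` to `-1`. -/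
noncomputable def sgn (r n : ℕ) (hr : 2 ∣ r) : G r n →* ℤˣ :=
  SemidirectProduct.lift (zmod2ToUnits.comp (csumHom r n hr)) Equiv.Perm.sign
    (by
      intro g
      refine MonoidHom.ext fun z => ?_
      have h1 : ∀ a x : ℤˣ, a * x * a⁻¹ = x := fun a x => by
        rw [mul_comm a x, mul_inv_cancel_right]
      simp only [MonoidHom.comp_apply, MulEquiv.coe_toMonoidHom, MulAut.conj_apply, h1]
      congr 1
      show csumHom r n hr (z ∘ g.symm) = csumHom r n hr z
      unfold csumHom
      simp only [MonoidHom.coe_mk, OneHom.coe_mk]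
      congr 1
      exact Equiv.sum_comp g.symm fun j => ZMod.castHom hr (ZMod 2) (toAdd (z j)))

/-- The group of alternating colored permutations `A_{r,n}`: the kernel of the sign
character of `G_{r,n}`. -/
noncomputable def Arn (r n : ℕ) (hr : 2 ∣ r) : Subgroup (G r n) := (sgn r n hr).ker

/-- The generators of `A_{r,n}`: `agen r n 0 = a₀ = s₀²` and
`agen r n i = aᵢ = s₀^{r/2} sᵢ` for `i ≥ 1`. -/
def agen (r n : ℕ) (i : ℕ) : G r n :=
  if i = 0 then gen r n 0 ^ 2 else gen r n 0 ^ (r / 2) * gen r n i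

/-- The generating set `𝒜 = {a₀, a₁, a₁⁻¹, a₂, …, a_{n-1}}` of `A_{r,n}`. -/
def Aset (r n : ℕ) : Set (G r n) :=
  {x | ∃ i ≤ n - 1, x = agen r n i} ∪ {(agen r n 1)⁻¹}

/-- The Coxeter-like generating set `{s₀, …, s_{n-1}}` of `G_{r,n}`. -/
def Sset (r n : ℕ) : Set (G r n) := {x | ∃ i < n, x = gen r n i}

/-- Word length of `g` with respect to a generating set `B`. -/
noncomputable def wordLength {H : Type*} [Group H] (B : Set H) (g : H) : ℕ :=
  sInf {k | ∃ w : List H, (∀ x ∈ w, x ∈ B) ∧ w.prod = g ∧ w.length = k}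

/-- The element `a₁² ∈ A_{r,n}`. -/
noncomputable def a1sq (r n : ℕ) (hr : 2 ∣ r) : ↥(Arn r n hr) :=
  ⟨agen r n 1 ^ 2, by rw [Arn, MonoidHom.mem_ker, map_pow]; exact Int.units_sq _⟩

/-- The operator `a ⊘ 2` : the residue mod `r/2` of `a/2` (`a` even) or of
`(a + r/2)/2` (`a` odd). -/
def oslash (r a : ℕ) : ℕ :=
  if a % 2 = 0 then (a / 2) % (r / 2) else ((a + r / 2) / 2) % (r / 2)

/-- `z_i(π)`, the color of digit `i+1` of `π`, as a natural number in `{0, …, r-1}`. -/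
def zval (r n : ℕ) (π : G r n) (i : Fin n) : ℕ := (toAdd (π.left i)).val

/-- `csum(π) = Σ z_i(π)`. -/
def csum (r n : ℕ) (π : G r n) : ℕ := ∑ i, zval r n π i

/-- Rank of the colored letter `b^{[c]}` (with `1 ≤ b ≤ n`, `0 ≤ c ≤ r-1`) in the
length order `n^{[r-1]} < ⋯ < 1^{[1]} < 1 < 2 < ⋯ < n`. -/
def rank (r n : ℕ) (b c : ℕ) : ℕ :=
  if c = 0 then n * (r - 1) + (b - 1) else (n - b) * (r - 1) + (r - 1 - c)

/-- Rank (in the length order) of the letter in position `i` of the window of `π`. -/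
def colRank (r n : ℕ) (π : G r n) (i : Fin n) : ℕ :=
  rank r n ((π.right i : ℕ) + 1) (zval r n π (π.right i))

/-- The inversion number of `π ∈ G_{r,n}` with respect to the length order. -/
noncomputable def inv (r n : ℕ) (π : G r n) : ℕ :=
  Nat.card {p : Fin n × Fin n // p.1 < p.2 ∧ colRank r n π p.2 < colRank r n π p.1}

/-- The ordinary inversion number of a permutation. -/
noncomputable def invPerm (n : ℕ) (τ : Equiv.Perm (Fin n)) : ℕ :=
  Nat.card {p : Fin n × Fin n // p.1 < p.2 ∧ τ p.2 < τ p.1}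

/-- The covering map `p : A_{r,n} → G_{r/2,n}`, `p(z, τ) = ((zᵢ ⊘ 2)ᵢ, τ)`. -/
def pmap (r n : ℕ) (π : G r n) : G (r / 2) n :=
  ⟨fun i => ofAdd ((oslash r (zval r n π i) : ZMod (r / 2))), π.right⟩

/-- The section `s : G_{r/2,n} → A_{r,n}`: doubles all colors (mod `r`), adding `r/2`
to the color of the digit `1` when `inv(|π|)` is odd. -/
noncomputable def smap (r n : ℕ) (π : G (r / 2) n) : G r n :=
  ⟨fun d => ofAdd
      (((2 * zval (r / 2) n π d +
        if (d : ℕ) = 0 ∧ invPerm n π.right % 2 = 1 then r / 2 else 0 : ℕ) : ZMod r)),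
   π.right⟩

/-- `c(π) = Σ_{i : z_i(π) ≠ 0} (i - 1)` (digits are `1`-based). -/
def cstat (r n : ℕ) (π : G r n) : ℕ :=
  ∑ i : Fin n, if zval r n π i ≠ 0 then (i : ℕ) else 0

/-- The number of absolute transparent inversions of `π`. -/
noncomputable def tinv (r n : ℕ) (π : G r n) : ℕ :=
  Nat.card {p : Fin n × Fin n //
    zval r n π p.1 = r / 2 ∧ p.2 < p.1 ∧ π.right⁻¹ p.1 < π.right⁻¹ p.2}

/-- The (digit-indexed) Lehmer code `l_i = #{j : j > i, τ⁻¹(i) > τ⁻¹(j)}`. -/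
noncomputable def lehmer (n : ℕ) (τ : Equiv.Perm (Fin n)) (i : Fin n) : ℕ :=
  Nat.card {j : Fin n // i < j ∧ τ⁻¹ j < τ⁻¹ i}


/-- `μ(π)`: the minimum of `β(ω) + n(ω)` over all factorizations
`ω = b₀ s₀^{i₁} b₁ ⋯ s₀^{i_{k+1}} b_{k+1}` of `π`, where each `b_u` is a word in
`s₁, …, s_{n-1}` only, `n(ω)` is the number of letters `sᵢ` with `i ≠ 0`, and
`β(ω) = Σ_u (i_u ⊘ 2)`. -/
noncomputable def mu (r n : ℕ) (π : G r n) : ℕ :=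
  sInf {m | ∃ (b₀ : List ℕ) (L : List (ℕ × List ℕ)),
    (∀ x ∈ b₀, 1 ≤ x ∧ x ≤ n - 1) ∧
    (∀ q ∈ L, ∀ x ∈ q.2, 1 ≤ x ∧ x ≤ n - 1) ∧
    π = (b₀.map (gen r n)).prod *
        (L.map (fun q => gen r n 0 ^ q.1 * (q.2.map (gen r n)).prod)).prod ∧
    m = (L.map (fun q => oslash r q.1)).sum +
        (b₀.length + (L.map (fun q => q.2.length)).sum)}

/-- The flag-inversion number on `A_{r,n}`:
`finv_A(π) = (r/2)·inv(|π|) + Σᵢ (cᵢ(π) ⊘ 2)` where `cᵢ(π) = r - zᵢ(π⁻¹) (mod r)`. -/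
noncomputable def finvA (r n : ℕ) (π : G r n) : ℕ :=
  (r / 2) * invPerm n π.right + ∑ i, oslash r ((r - zval r n π⁻¹ i) % r)

/-- The number of (colored) right-to-left minima of `π` whose color is not in `{0, r/2}`. -/
noncomputable def rtlMinA (r n : ℕ) (π : G r n) : ℕ :=
  Nat.card {i : Fin n // (∀ j : Fin n, i < j → π.right i < π.right j) ∧
    zval r n π (π.right i) ≠ 0 ∧ zval r n π (π.right i) ≠ r / 2}

/-- The defining relators of the Coxeter-like presentation of `A_{r,n}` on generators
`x₀, …, x_{n-1}`. -/
def rels (r n : ℕ) : Set (FreeGroup (Fin n)) :=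
  {w | ∃ i : Fin n, (i : ℕ) = 0 ∧ w = FreeGroup.of i ^ (r / 2)} ∪
  {w | ∃ i : Fin n, (i : ℕ) = 1 ∧ w = FreeGroup.of i ^ 4} ∪
  {w | ∃ i : Fin n, 2 ≤ (i : ℕ) ∧ w = FreeGroup.of i ^ 2} ∪
  {w | ∃ i j : Fin n, (i : ℕ) ≠ 1 ∧ (j : ℕ) ≠ 1 ∧ (i : ℕ) + 1 < (j : ℕ) ∧
    w = FreeGroup.of i * FreeGroup.of j * (FreeGroup.of i)⁻¹ * (FreeGroup.of j)⁻¹} ∪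
  {w | ∃ i j : Fin n, 1 ≤ (i : ℕ) ∧ (j : ℕ) = (i : ℕ) + 1 ∧
    w = (FreeGroup.of i * FreeGroup.of j) ^ 3} ∪
  {w | ∃ i j : Fin n, (i : ℕ) = 0 ∧ (j : ℕ) = 1 ∧
    w = (FreeGroup.of i * FreeGroup.of j) ^ (2 * r)} ∪
  {w | ∃ i j : Fin n, (i : ℕ) = 0 ∧ (j : ℕ) = 1 ∧
    w = (FreeGroup.of i * (FreeGroup.of j)⁻¹) ^ (2 * r)} ∪
  {w | ∃ i j : Fin n, (i : ℕ) = 0 ∧ (j : ℕ) = 1 ∧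
    w = FreeGroup.of i * FreeGroup.of j ^ 2 * (FreeGroup.of i)⁻¹ * (FreeGroup.of j ^ 2)⁻¹} ∪
  {w | ∃ i j : Fin n, (i : ℕ) = 1 ∧ 2 < (j : ℕ) ∧
    w = FreeGroup.of i * FreeGroup.of j * FreeGroup.of i * (FreeGroup.of j)⁻¹}

end ACP


theorem Equiv.Perm.inv_apply_self {α : Type*} (f : Equiv.Perm α) (x : α) : f⁻¹ (f x) = x :=
  Equiv.symm_apply_apply f x

theorem Equiv.Perm.apply_inv_self {α : Type*} (f : Equiv.Perm α) (x : α) : f (f⁻¹ x) = x :=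
  Equiv.apply_symm_apply f x

namespace AuxPerm

open Equiv Fin Finset

noncomputable def aStat (n : ℕ) (σ : Equiv.Perm (Fin n)) : ℕ :=
  letI := Classical.decEq
  (Finset.univ.filter fun v => ∀ w, w < v → σ w < σ v).card

noncomputable def ext1 {n : ℕ} (σ : Equiv.Perm (Fin n)) : Equiv.Perm (Fin (n+1)) :=
  finSuccEquivLast.symm.permCongr σ.optionCongr

lemma ext1_castSucc {n : ℕ} (σ : Equiv.Perm (Fin n)) (i : Fin n) :
    ext1 σ (castSucc i) = castSucc (σ i) := by
  simp [ext1, Equiv.permCongr_apply, finSuccEquivLast_castSucc]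

lemma ext1_last {n : ℕ} (σ : Equiv.Perm (Fin n)) :
    ext1 σ (last n) = last n := by
  simp [ext1, Equiv.permCongr_apply, finSuccEquivLast_last]

noncomputable def ins {n : ℕ} (p : Fin (n+1)) (σ : Equiv.Perm (Fin n)) :
    Equiv.Perm (Fin (n+1)) :=
  p.cycleRange⁻¹ * finRotate (n+1) * ext1 σ

lemma ins_last {n : ℕ} (p : Fin (n+1)) (σ : Equiv.Perm (Fin n)) :
    ins p σ (last n) = p := by
  have h0 : p.cycleRange p = 0 := Fin.cycleRange_self p
  have : p.cycleRange⁻¹ (0 : Fin (n+1)) = p := by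
    rw [← h0, Equiv.Perm.inv_apply_self]
  simp [ins, Equiv.Perm.mul_apply, ext1_last, finRotate_last, this]

lemma ins_castSucc {n : ℕ} (p : Fin (n+1)) (σ : Equiv.Perm (Fin n)) (i : Fin n) :
    ins p σ (castSucc i) = p.succAbove (σ i) := by
  have h1 : finRotate (n+1) (castSucc (σ i)) = (σ i).succ := by
    rw [finRotate_succ_apply, Fin.coeSucc_eq_succ]
  have h2 : p.cycleRange⁻¹ ((σ i).succ) = p.succAbove (σ i) := by
    rw [← Fin.cycleRange_succAbove p (σ i), Equiv.Perm.inv_apply_self]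
  simp [ins, Equiv.Perm.mul_apply, ext1_castSucc, h1, h2]

lemma aStat_card_le (n : ℕ) (σ : Equiv.Perm (Fin n)) : aStat n σ ≤ n := by
  classical
  have := Finset.card_filter_le (Finset.univ : Finset (Fin n))
    (fun v => ∀ w, w < v → σ w < σ v)
  simpa [aStat] using this

lemma aStat_ins {n : ℕ} (p : Fin (n+1)) (σ : Equiv.Perm (Fin n)) :
    aStat (n+1) (ins p σ) = aStat n σ + if p = last n then 1 else 0 := by
  classical
  have hcs : ∀ i : Fin n, ((∀ w, w < castSucc i → ins p σ w < ins p σ (castSucc i)) ↔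
      (∀ w, w < i → σ w < σ i)) := by
    intro i
    constructor
    · intro h w hw
      have := h (castSucc w) (by simpa using hw)
      rw [ins_castSucc, ins_castSucc, Fin.succAbove_lt_succAbove_iff] at this
      exact this
    · intro h w hw
      have hwl : w ≠ last n := by
        intro he
        exact absurd (he ▸ hw) (not_lt.2 (Fin.le_last _ |>.trans (le_refl _) |>.trans_eq rfl)).elim
      obtain ⟨u, rfl⟩ := Fin.exists_castSucc_eq.2 hwl
      rw [ins_castSucc, ins_castSucc, Fin.succAbove_lt_succAbove_iff]
      exact h u (by simpa using hw)
  have hlast : ((∀ w, w < last n → ins p σ w < ins p σ (last n)) ↔ p = last n) := by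
    rw [ins_last]
    constructor
    · intro h
      by_contra hp
      obtain ⟨u, hu⟩ := Fin.exists_succAbove_eq (Ne.symm hp)
      have := h (castSucc (σ⁻¹ u)) (Fin.castSucc_lt_last _)
      rw [ins_castSucc, Equiv.Perm.apply_inv_self, hu] at this
      exact absurd this (not_lt.2 (Fin.le_last p))
    · intro h w hw
      obtain ⟨u, rfl⟩ := Fin.exists_castSucc_eq.2 (Fin.ne_last_of_lt hw)
      rw [ins_castSucc, h, Fin.succAbove_last_apply]
      exact Fin.castSucc_lt_last _
  unfold aStat
  rw [Finset.card_filter, Finset.card_filter, Fin.sum_univ_castSucc]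
  congr 1
  · apply Finset.sum_congr rfl
    intro i _
    simp only [hcs i]
  · simp only [hlast]

lemma ins_injective (n : ℕ) :
    Function.Injective (fun x : Fin (n+1) × Equiv.Perm (Fin n) => ins x.1 x.2) := by
  rintro ⟨p, σ⟩ ⟨q, ρ⟩ h
  simp only at h
  have hp : p = q := by rw [← ins_last p σ, ← ins_last q ρ, h]
  subst hp
  have hσ : σ = ρ := by
    ext i
    have h2 : ins p σ (castSucc i) = ins p ρ (castSucc i) := by rw [h]
    rw [ins_castSucc, ins_castSucc] at h2
    have := Fin.succAbove_right_injective (p := p) h2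
    simp [this]
  simp [hσ]

lemma ins_bijective (n : ℕ) :
    Function.Bijective (fun x : Fin (n+1) × Equiv.Perm (Fin n) => ins x.1 x.2) := by
  rw [Fintype.bijective_iff_injective_and_card]
  refine ⟨ins_injective n, ?_⟩
  simp [Fintype.card_perm, Nat.factorial_succ]

lemma perm_sum {R : Type*} [CommRing R] (A B : R) (n : ℕ) :
    ∑ σ : Equiv.Perm (Fin n), A ^ aStat n σ * B ^ (n - aStat n σ) =
      ∏ i ∈ Finset.range n, (A + (i : R) * B) := by
  induction n with
  | zero =>
      rw [Finset.range_zero, Finset.prod_empty]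
      have h1 : ∀ σ : Equiv.Perm (Fin 0), A ^ aStat 0 σ * B ^ (0 - aStat 0 σ) = 1 := by
        intro σ; simp [aStat]
      rw [Finset.sum_congr rfl (fun σ _ => h1 σ), Finset.sum_const]
      simp
  | succ n ih =>
      rw [← Fintype.sum_bijective _ (ins_bijective n)
        (fun x => A ^ aStat (n+1) (ins x.1 x.2) * B ^ (n + 1 - aStat (n+1) (ins x.1 x.2)))
        (fun σ => A ^ aStat (n+1) σ * B ^ (n + 1 - aStat (n+1) σ)) (fun x => rfl)]
      rw [Fintype.sum_prod_type_right]
      have key : ∀ σ : Equiv.Perm (Fin n), ∀ p : Fin (n+1),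
          A ^ aStat (n+1) (ins p σ) * B ^ (n + 1 - aStat (n+1) (ins p σ)) =
          (A ^ aStat n σ * B ^ (n - aStat n σ)) * (if p = last n then A else B) := by
        intro σ p
        rw [aStat_ins]
        have hle := aStat_card_le n σ
        by_cases hp : p = last n <;> simp only [hp, if_true, if_false, reduceIte]
        · have : n + 1 - (aStat n σ + 1) = n - aStat n σ := by omega
          rw [this, pow_succ]; ring
        · have : n + 1 - (aStat n σ + 0) = (n - aStat n σ) + 1 := by omega
          rw [this, pow_succ]; ring
      calc ∑ σ : Equiv.Perm (Fin n), ∑ p : Fin (n+1),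
            A ^ aStat (n+1) (ins p σ) * B ^ (n + 1 - aStat (n+1) (ins p σ))
          = ∑ σ : Equiv.Perm (Fin n), (A ^ aStat n σ * B ^ (n - aStat n σ)) *
              (∑ p : Fin (n+1), if p = last n then A else B) := by
            refine Finset.sum_congr rfl fun σ _ => ?_
            rw [Finset.mul_sum]
            exact Finset.sum_congr rfl fun p _ => key σ p
        _ = ∏ i ∈ Finset.range (n+1), (A + (i : R) * B) := by
            have hsum : (∑ p : Fin (n+1), if p = last n then A else B) = A + (n : R) * B := by
              have h2 : ∀ p : Fin (n+1),
                  (if p = last n then A else B) = B + (if p = last n then A - B else 0) := by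
                intro p; split <;> ring
              rw [Finset.sum_congr rfl fun p _ => h2 p, Finset.sum_add_distrib,
                Finset.sum_const, Finset.sum_ite_eq' Finset.univ (last n) (fun _ => A - B)]
              simp only [Finset.mem_univ, if_true, Finset.card_univ, Fintype.card_fin,
                nsmul_eq_mul]
              push_cast; ring
            simp only [hsum]
            rw [← Finset.sum_mul, ih, Finset.prod_range_succ]

end AuxPerm

namespace AuxMain

open ACP Finset Polynomial Equiv
open scoped Classical

noncomputable def mStat (n : ℕ) (τ : Equiv.Perm (Fin n)) : ℕ :=
  (Finset.univ.filter fun i => ∀ j, i < j → τ i < τ j).card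

lemma mStat_eq_aStat (n : ℕ) (τ : Equiv.Perm (Fin n)) :
    mStat n τ = AuxPerm.aStat n τ⁻¹ := by
  unfold mStat AuxPerm.aStat
  refine Finset.card_nbij' (fun i => τ i) (fun v => τ⁻¹ v) ?_ ?_ ?_ ?_
  · intro i hi
    rw [Finset.mem_coe, Finset.mem_filter] at hi ⊢
    refine ⟨Finset.mem_univ _, fun w hw => ?_⟩
    have hw' : w < τ i := hw
    show τ⁻¹ w < τ⁻¹ (τ i)
    rw [Equiv.Perm.inv_apply_self]
    by_contra hc
    rcases (not_lt.1 hc).lt_or_eq with h | h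
    · exact absurd (hi.2 (τ⁻¹ w) h) (by rw [Equiv.Perm.apply_inv_self]; exact not_lt.2 hw'.le)
    · rw [h, Equiv.Perm.apply_inv_self] at hw'; exact lt_irrefl _ hw'
  · intro v hv
    rw [Finset.mem_coe, Finset.mem_filter] at hv ⊢
    refine ⟨Finset.mem_univ _, fun j hj => ?_⟩
    have hj' : τ⁻¹ v < j := hj
    show τ (τ⁻¹ v) < τ j
    by_contra hc
    rcases (not_lt.1 hc).lt_or_eq with h | h
    · have h2 := hv.2 (τ j) (by rwa [Equiv.Perm.apply_inv_self] at h)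
      rw [Equiv.Perm.inv_apply_self] at h2
      exact absurd hj' (not_lt.2 h2.le)
    · rw [Equiv.Perm.apply_inv_self] at h
      have hjv : j = τ⁻¹ v := by rw [← h, Equiv.Perm.inv_apply_self]
      rw [hjv] at hj'
      exact absurd hj' (lt_irrefl _)
  · intro i _; exact Equiv.Perm.inv_apply_self τ i
  · intro v _; exact Equiv.Perm.apply_inv_self τ v

def gEquiv (r n : ℕ) :
    ACP.G r n ≃ (Fin n → Multiplicative (ZMod r)) × Equiv.Perm (Fin n) where
  toFun g := (g.left, g.right)
  invFun x := ⟨x.1, x.2⟩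
  left_inv g := rfl
  right_inv x := rfl

noncomputable instance (r n : ℕ) [NeZero r] : Fintype (ACP.G r n) :=
  Fintype.ofEquiv _ (gEquiv r n).symm

lemma rtl_card (r n : ℕ) (π : ACP.G r n) :
    ACP.rtlMinA r n π = (Finset.univ.filter fun i : Fin n =>
      (∀ j, i < j → π.right i < π.right j) ∧ ACP.zval r n π (π.right i) ≠ 0 ∧
        ACP.zval r n π (π.right i) ≠ r / 2).card := by
  rw [ACP.rtlMinA, Nat.card_eq_fintype_card, Fintype.card_subtype]

lemma hcard_mult (r : ℕ) [NeZero r] : Fintype.card (Multiplicative (ZMod r)) = r := by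
  rw [Fintype.card_congr (Multiplicative.toAdd (α := ZMod r))]
  exact ZMod.card r

lemma hcount (r : ℕ) (hr2 : 2 ≤ r) (hre : r % 2 = 0) [NeZero r] :
    (Finset.univ.filter fun c : Multiplicative (ZMod r) =>
      ¬((Multiplicative.toAdd c).val ≠ 0 ∧ (Multiplicative.toAdd c).val ≠ r / 2)).card = 2 := by
  have hlt : r / 2 < r := by omega
  have hset : (Finset.univ.filter fun c : Multiplicative (ZMod r) =>
      ¬((Multiplicative.toAdd c).val ≠ 0 ∧ (Multiplicative.toAdd c).val ≠ r / 2)) =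
      {Multiplicative.ofAdd (0 : ZMod r), Multiplicative.ofAdd ((r/2 : ℕ) : ZMod r)} := by
    ext c
    simp only [Finset.mem_filter, Finset.mem_univ, true_and, Finset.mem_insert,
      Finset.mem_singleton, not_and_or, not_ne_iff]
    constructor
    · rintro (h | h)
      · left
        have : Multiplicative.toAdd c = 0 := (ZMod.val_eq_zero _).1 h
        rw [← ofAdd_toAdd c, this]
      · right
        have : Multiplicative.toAdd c = ((r/2 : ℕ) : ZMod r) :=
          ZMod.val_injective r (by rw [h, ZMod.val_cast_of_lt hlt])
        rw [← ofAdd_toAdd c, this]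
    · rintro (h | h)
      · left; rw [h]; simp [ZMod.val_zero]
      · right; rw [h]; simp [ZMod.val_cast_of_lt hlt]
  rw [hset, Finset.card_insert_of_notMem, Finset.card_singleton]
  rw [Finset.mem_singleton]
  intro h
  have : ((0 : ZMod r)).val = (((r/2 : ℕ) : ZMod r)).val := by
    have := congrArg (fun c => (Multiplicative.toAdd c).val) h
    simpa using this
  rw [ZMod.val_zero, ZMod.val_cast_of_lt hlt] at this
  omega

lemma hsum1 (r : ℕ) (hr2 : 2 ≤ r) (hre : r % 2 = 0) [NeZero r] :
    (∑ c : Multiplicative (ZMod r),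
      if (Multiplicative.toAdd c).val ≠ 0 ∧ (Multiplicative.toAdd c).val ≠ r / 2
      then (X : ℤ[X]) else 1) = ((r : ℤ[X]) - 2) * X + 2 := by
  rw [Finset.sum_ite (fun _ => (X : ℤ[X])) (fun _ => (1 : ℤ[X])), Finset.sum_const,
    Finset.sum_const, hcount r hr2 hre]
  have htot := Finset.card_filter_add_card_filter_not
    (s := (Finset.univ : Finset (Multiplicative (ZMod r))))
    (p := fun c => (Multiplicative.toAdd c).val ≠ 0 ∧ (Multiplicative.toAdd c).val ≠ r / 2)
  rw [Finset.card_univ, hcard_mult r, hcount r hr2 hre] at htot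
  have hQ : (Finset.univ.filter fun c : Multiplicative (ZMod r) =>
      (Multiplicative.toAdd c).val ≠ 0 ∧ (Multiplicative.toAdd c).val ≠ r / 2).card = r - 2 := by
    omega
  rw [hQ, nsmul_eq_mul, nsmul_eq_mul, mul_one, Nat.cast_sub hr2]
  push_cast
  ring

lemma hpow_card {α : Type*} [Fintype α] (p : α → Prop) [DecidablePred p] :
    (X : ℤ[X]) ^ (Finset.univ.filter p).card =
      ∏ i : α, (if p i then (X : ℤ[X]) else 1) := by
  rw [Finset.card_filter, ← Finset.prod_pow_eq_pow_sum]
  exact Finset.prod_congr rfl fun i _ => by split <;> simp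

lemma inner_sum (r n : ℕ) (hr2 : 2 ≤ r) (hre : r % 2 = 0) [NeZero r]
    (τ : Equiv.Perm (Fin n)) :
    ∑ z : Fin n → Multiplicative (ZMod r),
      (X : ℤ[X]) ^ (Finset.univ.filter fun i : Fin n => (∀ j, i < j → τ i < τ j) ∧
          (Multiplicative.toAdd (z (τ i))).val ≠ 0 ∧
          (Multiplicative.toAdd (z (τ i))).val ≠ r / 2).card =
    (((r : ℤ[X]) - 2) * X + 2) ^ mStat n τ * (r : ℤ[X]) ^ (n - mStat n τ) := by
  have hreidx := Fintype.sum_bijective (fun z : Fin n → Multiplicative (ZMod r) => z ∘ τ)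
    ((Equiv.arrowCongr τ.symm (Equiv.refl (Multiplicative (ZMod r)))).bijective)
    (fun z : Fin n → Multiplicative (ZMod r) => (X : ℤ[X]) ^ (Finset.univ.filter fun i : Fin n =>
        (∀ j, i < j → τ i < τ j) ∧ (Multiplicative.toAdd (z (τ i))).val ≠ 0 ∧
        (Multiplicative.toAdd (z (τ i))).val ≠ r / 2).card)
    (fun w => (X : ℤ[X]) ^ (Finset.univ.filter fun i : Fin n =>
        (∀ j, i < j → τ i < τ j) ∧ (Multiplicative.toAdd (w i)).val ≠ 0 ∧
        (Multiplicative.toAdd (w i)).val ≠ r / 2).card)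
    (fun z => rfl)
  rw [hreidx]
  have hrw : ∀ w : Fin n → Multiplicative (ZMod r),
      (X : ℤ[X]) ^ (Finset.univ.filter fun i : Fin n =>
        (∀ j, i < j → τ i < τ j) ∧ (Multiplicative.toAdd (w i)).val ≠ 0 ∧
        (Multiplicative.toAdd (w i)).val ≠ r / 2).card =
      ∏ i : Fin n, (if (∀ j, i < j → τ i < τ j) ∧ (Multiplicative.toAdd (w i)).val ≠ 0 ∧
        (Multiplicative.toAdd (w i)).val ≠ r / 2 then (X : ℤ[X]) else 1) :=
    fun w => hpow_card _
  rw [Finset.sum_congr rfl fun w _ => hrw w]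
  rw [show (Finset.univ : Finset (Fin n → Multiplicative (ZMod r))) =
      Fintype.piFinset (fun _ : Fin n => Finset.univ) from (Fintype.piFinset_univ).symm]
  have hswap := Finset.prod_univ_sum
    (fun _ : Fin n => (Finset.univ : Finset (Multiplicative (ZMod r))))
    (fun (i : Fin n) (c : Multiplicative (ZMod r)) =>
      if (∀ j, i < j → τ i < τ j) ∧ (Multiplicative.toAdd c).val ≠ 0 ∧
        (Multiplicative.toAdd c).val ≠ r / 2 then (X : ℤ[X]) else 1)
  have hstep : (∑ w ∈ Fintype.piFinset
        (fun _ : Fin n => (Finset.univ : Finset (Multiplicative (ZMod r)))),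
      ∏ i : Fin n, if (∀ j, i < j → τ i < τ j) ∧ (Multiplicative.toAdd (w i)).val ≠ 0 ∧
        (Multiplicative.toAdd (w i)).val ≠ r / 2 then (X : ℤ[X]) else 1) =
      ∏ i : Fin n, ∑ c : Multiplicative (ZMod r),
        (if (∀ j, i < j → τ i < τ j) ∧ (Multiplicative.toAdd c).val ≠ 0 ∧
          (Multiplicative.toAdd c).val ≠ r / 2 then (X : ℤ[X]) else 1) := hswap.symm
  rw [hstep]
  have hfac : ∀ i : Fin n,
      (∑ c : Multiplicative (ZMod r), if (∀ j, i < j → τ i < τ j) ∧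
        (Multiplicative.toAdd c).val ≠ 0 ∧ (Multiplicative.toAdd c).val ≠ r / 2
        then (X : ℤ[X]) else 1) =
      if (∀ j, i < j → τ i < τ j) then ((r : ℤ[X]) - 2) * X + 2 else (r : ℤ[X]) := by
    intro i
    by_cases hP : ∀ j, i < j → τ i < τ j
    · rw [if_pos hP]
      have hone : ∀ c : Multiplicative (ZMod r),
          (if (∀ j, i < j → τ i < τ j) ∧ (Multiplicative.toAdd c).val ≠ 0 ∧
            (Multiplicative.toAdd c).val ≠ r / 2 then (X : ℤ[X]) else 1) =
          (if (Multiplicative.toAdd c).val ≠ 0 ∧ (Multiplicative.toAdd c).val ≠ r / 2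
            then (X : ℤ[X]) else 1) := by
        intro c
        by_cases h : (Multiplicative.toAdd c).val ≠ 0 ∧ (Multiplicative.toAdd c).val ≠ r / 2
        · rw [if_pos ⟨hP, h⟩, if_pos h]
        · rw [if_neg (fun hc => h hc.2), if_neg h]
      rw [Finset.sum_congr rfl fun c _ => hone c]
      exact hsum1 r hr2 hre
    · have hone : ∀ c : Multiplicative (ZMod r),
          (if (∀ j, i < j → τ i < τ j) ∧ (Multiplicative.toAdd c).val ≠ 0 ∧
            (Multiplicative.toAdd c).val ≠ r / 2 then (X : ℤ[X]) else 1) = 1 := by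
        intro c; rw [if_neg]; exact fun hc => hP hc.1
      rw [Finset.sum_congr rfl fun c _ => hone c, Finset.sum_const, Finset.card_univ,
        hcard_mult r, nsmul_eq_mul, mul_one, if_neg hP]
  rw [Finset.prod_congr rfl fun i _ => hfac i]
  rw [Finset.prod_ite (fun _ => ((r : ℤ[X]) - 2) * X + 2) (fun _ => (r : ℤ[X]))]
  rw [Finset.prod_const, Finset.prod_const]
  have h1 : (Finset.univ.filter fun i : Fin n => ∀ j, i < j → τ i < τ j).card = mStat n τ := rfl
  have htot := Finset.card_filter_add_card_filter_not
    (s := (Finset.univ : Finset (Fin n))) (p := fun i : Fin n => ∀ j, i < j → τ i < τ j)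
  rw [Finset.card_univ, Fintype.card_fin, h1] at htot
  rw [h1, show (Finset.univ.filter fun i : Fin n =>
      ¬∀ j, i < j → τ i < τ j).card = n - mStat n τ by omega]

lemma sum_all (r n : ℕ) (hr2 : 2 ≤ r) (hre : r % 2 = 0) [NeZero r] :
    ∑ π : ACP.G r n, (X : ℤ[X]) ^ ACP.rtlMinA r n π =
      ∏ i ∈ Finset.range n, ((((r : ℤ[X]) - 2) * X + 2) + (i : ℤ[X]) * (r : ℤ[X])) := by
  rw [← Equiv.sum_comp (gEquiv r n).symm (fun π => (X : ℤ[X]) ^ ACP.rtlMinA r n π)]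
  rw [Fintype.sum_prod_type_right]
  have hinner : ∀ τ : Equiv.Perm (Fin n),
      ∑ z : Fin n → Multiplicative (ZMod r),
        (X : ℤ[X]) ^ ACP.rtlMinA r n ((gEquiv r n).symm (z, τ)) =
      (((r : ℤ[X]) - 2) * X + 2) ^ mStat n τ * (r : ℤ[X]) ^ (n - mStat n τ) := by
    intro τ
    rw [← inner_sum r n hr2 hre τ]
    refine Finset.sum_congr rfl fun z _ => ?_
    congr 1
    exact rtl_card r n _
  rw [Finset.sum_congr rfl fun τ _ => hinner τ]
  have hm : ∀ τ : Equiv.Perm (Fin n),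
      (((r : ℤ[X]) - 2) * X + 2) ^ mStat n τ * (r : ℤ[X]) ^ (n - mStat n τ) =
      (((r : ℤ[X]) - 2) * X + 2) ^ AuxPerm.aStat n τ⁻¹ *
        (r : ℤ[X]) ^ (n - AuxPerm.aStat n τ⁻¹) := by
    intro τ; rw [mStat_eq_aStat]
  rw [Finset.sum_congr rfl fun τ _ => hm τ]
  have hinv := Fintype.sum_bijective (fun τ : Equiv.Perm (Fin n) => τ⁻¹)
    (Function.Involutive.bijective fun τ => inv_inv τ)
    (fun τ : Equiv.Perm (Fin n) => (((r : ℤ[X]) - 2) * X + 2) ^ AuxPerm.aStat n τ⁻¹ *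
        (r : ℤ[X]) ^ (n - AuxPerm.aStat n τ⁻¹))
    (fun σ => (((r : ℤ[X]) - 2) * X + 2) ^ AuxPerm.aStat n σ *
        (r : ℤ[X]) ^ (n - AuxPerm.aStat n σ)) (fun τ => rfl)
  rw [hinv]
  exact AuxPerm.perm_sum _ _ n

noncomputable def delta (r n : ℕ) : Fin n → Multiplicative (ZMod r) :=
  fun d => if (d : ℕ) = 0 then Multiplicative.ofAdd ((r / 2 : ℕ) : ZMod r) else 1

noncomputable def flip (r n : ℕ) (π : ACP.G r n) : ACP.G r n :=
  ⟨π.left * delta r n, π.right⟩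

lemma flip_right (r n : ℕ) (π : ACP.G r n) : (flip r n π).right = π.right := rfl

lemma flip_flip (r n : ℕ) (hre : r % 2 = 0) (hr0 : 0 < r) (π : ACP.G r n) :
    flip r n (flip r n π) = π := by
  have hδ : delta r n * delta r n = 1 := by
    funext d
    show delta r n d * delta r n d = 1
    unfold delta
    by_cases hd : (d : ℕ) = 0
    · rw [if_pos hd, ← ofAdd_add, ← Nat.cast_add, show r / 2 + r / 2 = r by omega]
      simp [ZMod.natCast_self]
    · rw [if_neg hd, mul_one]
  show (⟨π.left * delta r n * delta r n, π.right⟩ : ACP.G r n) = π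
  rw [mul_assoc, hδ, mul_one]

lemma zval_flip_ne (r n : ℕ) (π : ACP.G r n) (d : Fin n) (hd : (d : ℕ) ≠ 0) :
    ACP.zval r n (flip r n π) d = ACP.zval r n π d := by
  unfold ACP.zval
  show (Multiplicative.toAdd (π.left d * delta r n d)).val = _
  unfold delta
  rw [if_neg hd, mul_one]

lemma zval_flip_zero (r n : ℕ) [NeZero r] (hr2 : 2 ≤ r) (π : ACP.G r n) (d : Fin n)
    (hd : (d : ℕ) = 0) :
    ACP.zval r n (flip r n π) d = (ACP.zval r n π d + r / 2) % r := by
  unfold ACP.zval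
  show (Multiplicative.toAdd (π.left d * delta r n d)).val = _
  unfold delta
  rw [if_pos hd, toAdd_mul, toAdd_ofAdd, ZMod.val_add,
    ZMod.val_cast_of_lt (by omega : r / 2 < r)]

lemma rtl_flip (r n : ℕ) (hr2 : 2 ≤ r) (hre : r % 2 = 0) [NeZero r] (π : ACP.G r n) :
    ACP.rtlMinA r n (flip r n π) = ACP.rtlMinA r n π := by
  rw [ACP.rtlMinA, ACP.rtlMinA]
  apply Nat.card_congr
  apply Equiv.subtypeEquivRight
  intro i
  rw [flip_right]
  have hz : ∀ d : Fin n,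
      ((ACP.zval r n (flip r n π) d ≠ 0 ∧ ACP.zval r n (flip r n π) d ≠ r / 2) ↔
       (ACP.zval r n π d ≠ 0 ∧ ACP.zval r n π d ≠ r / 2)) := by
    intro d
    by_cases hd : (d : ℕ) = 0
    · rw [zval_flip_zero r n hr2 π d hd]
      have hlt : ACP.zval r n π d < r := ZMod.val_lt _
      rcases Nat.lt_or_ge (ACP.zval r n π d) (r / 2) with hv2 | hv2
      · rw [Nat.mod_eq_of_lt (by omega)]
        omega
      · rw [show (ACP.zval r n π d + r / 2) % r = ACP.zval r n π d + r / 2 - r by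
          rw [Nat.mod_eq_sub_mod (by omega), Nat.mod_eq_of_lt (by omega)]]
        omega
    · rw [zval_flip_ne r n π d hd]
  exact and_congr Iff.rfl (hz _)

lemma sgn_apply (r n : ℕ) (hd : 2 ∣ r) (π : ACP.G r n) :
    ACP.sgn r n hd π =
      ACP.zmod2ToUnits (ACP.csumHom r n hd π.left) * Equiv.Perm.sign π.right := by
  conv_lhs => rw [← SemidirectProduct.inl_left_mul_inr_right π]
  unfold ACP.sgn
  rw [map_mul, SemidirectProduct.lift_inl, SemidirectProduct.lift_inr, MonoidHom.comp_apply]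

lemma csum_delta (r n : ℕ) (hd : 2 ∣ r) (hr4 : r % 4 = 2) (hn : 0 < n) :
    ACP.csumHom r n hd (delta r n) = Multiplicative.ofAdd (1 : ZMod 2) := by
  unfold ACP.csumHom
  simp only [MonoidHom.coe_mk, OneHom.coe_mk]
  congr 1
  have h1 : ∀ i : Fin n, (ZMod.castHom hd (ZMod 2) (Multiplicative.toAdd (delta r n i))) =
      if i = (⟨0, hn⟩ : Fin n) then 1 else 0 := by
    intro i
    unfold delta
    by_cases hi : (i : ℕ) = 0
    · rw [if_pos hi, if_pos (Fin.ext hi)]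
      rw [toAdd_ofAdd, map_natCast]
      obtain ⟨k, hk⟩ : ∃ k, r / 2 = 2 * k + 1 := ⟨r / 4, by omega⟩
      rw [hk, Nat.cast_add, Nat.cast_mul, Nat.cast_one, Nat.cast_ofNat,
        show (2 : ZMod 2) = 0 by decide]
      ring
    · rw [if_neg hi, if_neg (fun h => hi (by rw [h]))]
      simp
  rw [Finset.sum_congr rfl fun i _ => h1 i,
    Finset.sum_ite_eq' Finset.univ (⟨0, hn⟩ : Fin n) (fun _ => (1 : ZMod 2))]
  simp

lemma sgn_flip (r n : ℕ) (hd : 2 ∣ r) (hr4 : r % 4 = 2) (hn : 0 < n) (π : ACP.G r n) :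
    ACP.sgn r n hd (flip r n π) = - ACP.sgn r n hd π := by
  rw [sgn_apply, sgn_apply, flip_right]
  have hl : (flip r n π).left = π.left * delta r n := rfl
  rw [hl, map_mul, csum_delta r n hd hr4 hn, map_mul]
  have h2 : ACP.zmod2ToUnits (Multiplicative.ofAdd (1 : ZMod 2)) = -1 := by
    show ((-1 : ℤˣ) ^ (Multiplicative.toAdd (Multiplicative.ofAdd (1 : ZMod 2))).val) = -1
    rw [toAdd_ofAdd, show (1 : ZMod 2).val = 1 by decide]
    exact pow_one _
  rw [h2, mul_neg_one, neg_mul]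

end AuxMain



open Polynomial in
/-- the generating function of `RtlMin_A` over `A_{r,n}` is
`2^{n-1} Π_{i=1}^{n} ((r/2)(q+i-1) + 1 - q)`. -/
theorem rtlMinA_genfun (r n : ℕ) (hn : 1 ≤ n) (hr : r % 4 = 2) :
    ∑ᶠ π ∈ (ACP.Arn r n (by omega) : Set (ACP.G r n)), (X : ℤ[X]) ^ ACP.rtlMinA r n π =
      2 ^ (n - 1) * ∏ i ∈ Finset.range n,
        (((r / 2 : ℕ) : ℤ[X]) * (X + ((i : ℕ) : ℤ[X])) + 1 - X) := by
  classical
  have hr2 : 2 ≤ r := by omega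
  have hre : r % 2 = 0 := by omega
  have hdvd : 2 ∣ r := by omega
  haveI : NeZero r := ⟨by omega⟩
  have hset : ((ACP.Arn r n (by omega : 2 ∣ r)) : Set (ACP.G r n)) =
      ↑(Finset.univ.filter fun π => π ∈ ACP.Arn r n hdvd) := by
    ext π; simp
  rw [hset, finsum_mem_coe_finset]
  have hswap : (∑ π ∈ Finset.univ.filter fun π => π ∈ ACP.Arn r n hdvd,
        (X : ℤ[X]) ^ ACP.rtlMinA r n π)
      = ∑ π ∈ Finset.univ.filter fun π => π ∉ ACP.Arn r n hdvd,
        (X : ℤ[X]) ^ ACP.rtlMinA r n π := by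
    refine Finset.sum_bij' (fun π _ => AuxMain.flip r n π) (fun π _ => AuxMain.flip r n π)
      ?_ ?_ ?_ ?_ ?_
    · intro π hπ
      rw [Finset.mem_filter] at hπ ⊢
      refine ⟨Finset.mem_univ _, fun hmem => ?_⟩
      have h1 : ACP.sgn r n hdvd π = 1 := hπ.2
      have h2 : ACP.sgn r n hdvd (AuxMain.flip r n π) = 1 := hmem
      rw [AuxMain.sgn_flip r n hdvd hr hn π, h1] at h2
      have h3 := congrArg (fun u : ℤˣ => (u : ℤ)) h2
      norm_num at h3
    · intro π hπ
      rw [Finset.mem_filter] at hπ ⊢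
      refine ⟨Finset.mem_univ _, ?_⟩
      have h1 : ACP.sgn r n hdvd π = -1 := by
        rcases Int.units_eq_one_or (ACP.sgn r n hdvd π) with h | h
        · exact absurd h hπ.2
        · exact h
      show ACP.sgn r n hdvd (AuxMain.flip r n π) = 1
      rw [AuxMain.sgn_flip r n hdvd hr hn π, h1, neg_neg]
    · intro π _; exact AuxMain.flip_flip r n hre (by omega) π
    · intro π _; exact AuxMain.flip_flip r n hre (by omega) π
    · intro π _
      rw [AuxMain.rtl_flip r n hr2 hre π]
  have htot := Finset.sum_filter_add_sum_filter_not (Finset.univ : Finset (ACP.G r n))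
    (fun π => π ∈ ACP.Arn r n hdvd) (fun π => (X : ℤ[X]) ^ ACP.rtlMinA r n π)
  have h2T : (2 : ℤ[X]) * ∑ π ∈ Finset.univ.filter fun π => π ∈ ACP.Arn r n hdvd,
        (X : ℤ[X]) ^ ACP.rtlMinA r n π =
      ∏ i ∈ Finset.range n, ((((r : ℤ[X]) - 2) * X + 2) + (i : ℤ[X]) * (r : ℤ[X])) := by
    rw [two_mul]
    nth_rewrite 2 [hswap]
    rw [htot, AuxMain.sum_all r n hr2 hre]
  have hRHS : (∏ i ∈ Finset.range n, ((((r : ℤ[X]) - 2) * X + 2) + (i : ℤ[X]) * (r : ℤ[X])))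
      = 2 * (2 ^ (n - 1) * ∏ i ∈ Finset.range n,
        (((r / 2 : ℕ) : ℤ[X]) * (X + ((i : ℕ) : ℤ[X])) + 1 - X)) := by
    have hfac : ∀ i ∈ Finset.range n,
        ((((r : ℤ[X]) - 2) * X + 2) + (i : ℤ[X]) * (r : ℤ[X])) =
        2 * (((r / 2 : ℕ) : ℤ[X]) * (X + ((i : ℕ) : ℤ[X])) + 1 - X) := by
      intro i _
      have h2r : ((r : ℕ) : ℤ[X]) = 2 * ((r / 2 : ℕ) : ℤ[X]) := by
        rw [← Nat.cast_two, ← Nat.cast_mul]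
        congr 1
        omega
      rw [h2r]
      ring
    rw [Finset.prod_congr rfl hfac, Finset.prod_mul_distrib, Finset.prod_const,
      Finset.card_range]
    have hpow2 : (2 : ℤ[X]) ^ n = 2 * 2 ^ (n - 1) := by
      conv_lhs => rw [show n = (n - 1) + 1 by omega]
      rw [pow_succ']
    rw [hpow2]
    ring
  have h2ne : (2 : ℤ[X]) ≠ 0 := by
    intro h
    have := congrArg (fun p : ℤ[X] => p.coeff 0) h
    simp at this
  exact mul_left_cancel₀ h2ne (h2T.trans hRHS)
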